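/- For every nonzero v ∈ V₄, the subspace F_v := V₂∧V₄∧v of V_{2,4}, spanned by all x∧w∧v with x ∈ V₂ and w ∈ V₄, has dimension 6 and is η_{2,4}-isotropic; hence F_v is a Lagrangian subspace of the 12-dimensional symplectic space (V_{2,4}, η_{2,4}). -/

import Mathlib

open ExteriorAlgebra Module

noncomputable section

variable {V : Type*} [AddCommGroup V] [Module ℂ V]

/-- The product of elements of the `j`-th and `k`-th exterior powers lies in the
`(j+k)`-th exterior power. -/
theorem mul_mem_exteriorPower {j k : ℕ} {x y : ExteriorAlgebra ℂ V}
    (hx : x ∈ ⋀[ℂ]^j V) (hy : y ∈ ⋀[ℂ]^k V) : x * y ∈ ⋀[ℂ]^(j + k) V := by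
  rw [exteriorPower, pow_add]
  exact Submodule.mul_mem_mul hx hy

theorem ι_mem_one (a : V) : ι ℂ a ∈ ⋀[ℂ]^1 V := by
  rw [exteriorPower, pow_one]
  exact LinearMap.mem_range_self _ a

theorem triple_mem (a b c : V) : ι ℂ a * ι ℂ b * ι ℂ c ∈ ⋀[ℂ]^3 V :=
  mul_mem_exteriorPower (mul_mem_exteriorPower (ι_mem_one a) (ι_mem_one b)) (ι_mem_one c)

/-- `⋀³U`: the subspace of the exterior algebra spanned by all `a ∧ b ∧ c` with
`a, b, c ∈ U`. -/
def cube (U : Submodule ℂ V) : Submodule ℂ (ExteriorAlgebra ℂ V) :=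
  Submodule.span ℂ {x | ∃ a ∈ U, ∃ b ∈ U, ∃ c ∈ U, x = ι ℂ a * ι ℂ b * ι ℂ c}

/-- `⋀²U₁ ∧ U₂`: the subspace of `⋀³V` spanned by all `a ∧ b ∧ c` with `a, b ∈ U₁`,
`c ∈ U₂`. -/
def wedge21 (U₁ U₂ : Submodule ℂ V) : Submodule ℂ (ExteriorAlgebra ℂ V) :=
  Submodule.span ℂ {x | ∃ a ∈ U₁, ∃ b ∈ U₁, ∃ c ∈ U₂, x = ι ℂ a * ι ℂ b * ι ℂ c}

/-- `U₁ ∧ ⋀²U₂`: the subspace of `⋀³V` spanned by all `a ∧ b ∧ c` with `a ∈ U₁`,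
`b, c ∈ U₂`. -/
def wedge12 (U₁ U₂ : Submodule ℂ V) : Submodule ℂ (ExteriorAlgebra ℂ V) :=
  Submodule.span ℂ {x | ∃ a ∈ U₁, ∃ b ∈ U₂, ∃ c ∈ U₂, x = ι ℂ a * ι ℂ b * ι ℂ c}

theorem cube_le (U : Submodule ℂ V) : cube U ≤ ⋀[ℂ]^3 V := by
  rw [cube, Submodule.span_le]
  rintro x ⟨a, -, b, -, c, -, rfl⟩
  exact triple_mem a b c

theorem wedge21_le (U₁ U₂ : Submodule ℂ V) : wedge21 U₁ U₂ ≤ ⋀[ℂ]^3 V := by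
  rw [wedge21, Submodule.span_le]
  rintro x ⟨a, -, b, -, c, -, rfl⟩
  exact triple_mem a b c

theorem wedge12_le (U₁ U₂ : Submodule ℂ V) : wedge12 U₁ U₂ ≤ ⋀[ℂ]^3 V := by
  rw [wedge12, Submodule.span_le]
  rintro x ⟨a, -, b, -, c, -, rfl⟩
  exact triple_mem a b c

/-- `F_v = V₂ ∧ V₄ ∧ v`: the subspace spanned by all `x ∧ w ∧ v` with `x ∈ V₂`, `w ∈ V₄`. -/
def Fv24 (V₂ V₄ : Submodule ℂ V) (v : V) : Submodule ℂ (ExteriorAlgebra ℂ V) :=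
  Submodule.span ℂ {y | ∃ x ∈ V₂, ∃ w ∈ V₄, y = ι ℂ x * ι ℂ w * ι ℂ v}

theorem Fv24_le (V₂ V₄ : Submodule ℂ V) (v : V) : Fv24 V₂ V₄ v ≤ ⋀[ℂ]^3 V := by
  rw [Fv24, Submodule.span_le]
  rintro y ⟨x, -, w, -, rfl⟩
  exact triple_mem x w v


theorem ι_anticomm (p q : V) : ι ℂ p * ι ℂ q = -(ι ℂ q * ι ℂ p) :=
  eq_neg_of_add_eq_zero_left (ι_add_mul_swap p q)

theorem gen_mul_gen (a b c d u : V) :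
    (ι ℂ a * ι ℂ b * ι ℂ u) * (ι ℂ c * ι ℂ d * ι ℂ u) = 0 := by
  have inner : ι ℂ u * (ι ℂ d * ι ℂ u) = 0 := by
    rw [← mul_assoc, ι_anticomm u d, neg_mul, mul_assoc, ι_sq_zero, mul_zero, neg_zero]
  have key : ι ℂ u * (ι ℂ c * ι ℂ d * ι ℂ u) = 0 := by
    simp only [← mul_assoc]
    rw [ι_anticomm u c]
    simp [mul_assoc, inner]
  rw [mul_assoc, key, mul_zero]

theorem ιMulti_three (a b c : V) :
    (ιMulti ℂ 3 ![a, b, c] : ExteriorAlgebra ℂ V) = ι ℂ a * ι ℂ b * ι ℂ c := by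
  rw [ιMulti_apply]
  simp [List.ofFn_succ, mul_assoc]

theorem Fv24_mul_eq_zero (V₂ V₄ : Submodule ℂ V) (v : V) {a b : ExteriorAlgebra ℂ V}
    (ha : a ∈ Fv24 V₂ V₄ v) (hb : b ∈ Fv24 V₂ V₄ v) : a * b = 0 := by
  refine Submodule.span_induction₂ (p := fun x y _ _ => x * y = 0) ?_ ?_ ?_ ?_ ?_ ?_ ?_ ha hb
  · rintro _ _ ⟨p, -, q, -, rfl⟩ ⟨r, -, s, -, rfl⟩
    exact gen_mul_gen p q r s v
  · intro y _; exact zero_mul y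
  · intro x _; exact mul_zero x
  · intro x y z _ _ _ h1 h2; rw [add_mul, h1, h2, add_zero]
  · intro x y z _ _ _ h1 h2; rw [mul_add, h1, h2, add_zero]
  · intro r x y _ _ h; rw [smul_mul_assoc, h, smul_zero]
  · intro r x y _ _ h; rw [mul_smul_comm, h, smul_zero]

theorem lift_det_apply (f g h : V →ₗ[ℂ] ℂ) (a b c : V) :
    liftAlternating (R := ℂ) (M := V) (N := ℂ) (Function.update (fun _ => 0) 3
      ((Matrix.detRowAlternating (R := ℂ) (n := Fin 3)).compLinearMap
        (LinearMap.pi ![f, g, h]))) (ι ℂ a * ι ℂ b * ι ℂ c) =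
      f a * g b * h c - f a * h b * g c - g a * f b * h c
        + g a * h b * f c + h a * f b * g c - h a * g b * f c := by
  rw [← ιMulti_three, liftAlternating_apply_ιMulti, Function.update_self]
  show Matrix.detRowAlternating ((LinearMap.pi ![f, g, h]) ∘ ![a, b, c]) = _
  have hdet : Matrix.detRowAlternating ((LinearMap.pi ![f, g, h]) ∘ ![a, b, c])
      = (Matrix.of ((LinearMap.pi ![f, g, h]) ∘ ![a, b, c])).det := rfl
  rw [hdet, Matrix.det_fin_three]
  simp [Matrix.cons_val_zero, Matrix.cons_val_one, LinearMap.pi_apply]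

set_option maxHeartbeats 1000000 in
/-- Let `V = V₂ ⊕ V₄` with `dim V₂ = 2`, `dim V₄ = 4`. For every nonzero
`v ∈ V₄`, the subspace `F_v = V₂ ∧ V₄ ∧ v` of `V_{2,4} = V₂ ∧ ⋀²V₄` has dimension 6 and is
`η_{2,4}`-isotropic; hence it is a Lagrangian subspace of the 12-dimensional symplectic
space `(V_{2,4}, η_{2,4})`. -/
theorem statement9 (V : Type*) [AddCommGroup V] [Module ℂ V] [FiniteDimensional ℂ V]
    (h6 : finrank ℂ V = 6)
    (vol : (⋀[ℂ]^6 V) →ₗ[ℂ] ℂ) (hvol : vol ≠ 0)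
    (V₂ V₄ : Submodule ℂ V) (hV₂ : finrank ℂ V₂ = 2) (hV₄ : finrank ℂ V₄ = 4)
    (hcompl : IsCompl V₂ V₄)
    (v : V) (hvV₄ : v ∈ V₄) (hv : v ≠ 0) :
    Fv24 V₂ V₄ v ≤ wedge12 V₂ V₄ ∧
    finrank ℂ ↥(Fv24 V₂ V₄ v) = 6 ∧
    (∀ x (hx : x ∈ Fv24 V₂ V₄ v) y (hy : y ∈ Fv24 V₂ V₄ v),
      vol ⟨x * y, mul_mem_exteriorPower (Fv24_le V₂ V₄ v hx) (Fv24_le V₂ V₄ v hy)⟩ = 0) := by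
  classical
  -- the basis setup
  set v' : V₄ := ⟨v, hvV₄⟩ with hv'def
  have hv' : v' ≠ 0 := by simp [hv'def, Submodule.mk_eq_zero, hv]
  obtain ⟨W, hW⟩ := Submodule.exists_isCompl (ℂ ∙ v')
  have hWrank : finrank ℂ W = 3 := by
    have h1 := Submodule.finrank_add_eq_of_isCompl hW
    rw [finrank_span_singleton hv', hV₄] at h1
    omega
  let b₂ : Basis (Fin 2) ℂ V₂ := finBasisOfFinrankEq ℂ V₂ hV₂
  let b₃ : Basis (Fin 3) ℂ W := finBasisOfFinrankEq ℂ W hWrank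
  have hli : LinearIndependent ℂ (fun _ : Fin 1 => v') := linearIndependent_unique_iff.mpr hv'
  have hsp : Submodule.span ℂ (Set.range (fun _ : Fin 1 => v')) = (ℂ ∙ v') := by
    rw [Set.range_const]
  let b₁ : Basis (Fin 1) ℂ (ℂ ∙ v') := (Basis.span hli).map (LinearEquiv.ofEq _ _ hsp)
  have hb₁ : (b₁ 0 : V₄) = v' := by simp [b₁, Basis.span_apply]
  let b₄ : Basis (Fin 1 ⊕ Fin 3) ℂ V₄ :=
    (b₁.prod b₃).map (Submodule.prodEquivOfIsCompl _ _ hW)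
  let B : Basis (Fin 2 ⊕ (Fin 1 ⊕ Fin 3)) ℂ V :=
    (b₂.prod b₄).map (Submodule.prodEquivOfIsCompl _ _ hcompl)
  set x : Fin 2 → V := fun i => (b₂ i : V) with hxdef
  set w : Fin 3 → V := fun j => ((b₃ j : V₄) : V) with hwdef
  have hb₄inl : b₄ (Sum.inl 0) = v' := by
    simp [b₄, Basis.map_apply, Basis.prod_apply, hb₁]
  have hb₄inr : ∀ j, b₄ (Sum.inr j) = (b₃ j : V₄) := by
    intro j; simp [b₄, Basis.map_apply, Basis.prod_apply]
  have hBinl : ∀ i, B (Sum.inl i) = x i := by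
    intro i; simp [B, Basis.map_apply, Basis.prod_apply, hxdef]
  have hBv : B (Sum.inr (Sum.inl 0)) = v := by
    simp [B, Basis.map_apply, Basis.prod_apply, hb₄inl, hv'def]
  have hBw : ∀ j, B (Sum.inr (Sum.inr j)) = w j := by
    intro j; simp [B, Basis.map_apply, Basis.prod_apply, hb₄inr, hwdef]
  have hcoord : ∀ s t, B.coord t (B s) = if s = t then (1 : ℂ) else 0 := by
    intro s t; simp [Basis.coord_apply, Basis.repr_self, Finsupp.single_apply]
  set e : Fin 2 × Fin 3 → ExteriorAlgebra ℂ V :=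
    fun p => ι ℂ (x p.1) * ι ℂ (w p.2) * ι ℂ v with hedef
  -- linear independence of `e`
  have hlie : LinearIndependent ℂ e := by
    rw [Fintype.linearIndependent_iff]
    intro g hg p
    obtain ⟨k, l⟩ := p
    set φ : ExteriorAlgebra ℂ V →ₗ[ℂ] ℂ :=
      liftAlternating (R := ℂ) (M := V) (N := ℂ) (Function.update (fun _ => 0) 3
        ((Matrix.detRowAlternating (R := ℂ) (n := Fin 3)).compLinearMap
          (LinearMap.pi ![B.coord (Sum.inl k), B.coord (Sum.inr (Sum.inr l)),
            B.coord (Sum.inr (Sum.inl 0))]))) with hφdef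
    have hφe : ∀ i j, φ (e (i, j)) = (if i = k then (1 : ℂ) else 0) * (if j = l then 1 else 0) := by
      intro i j
      have he : e (i, j) = ι ℂ (x i) * ι ℂ (w j) * ι ℂ v := by rw [hedef]
      rw [he, hφdef, lift_det_apply, ← hBinl i, ← hBw j, ← hBv]
      by_cases hik : i = k <;> by_cases hjl : j = l <;>
        simp [hcoord, hik, hjl]
    have h0 := congrArg φ hg
    rw [map_zero] at h0
    simp only [map_sum, map_smul] at h0
    have hsum : ∑ q : Fin 2 × Fin 3, g q • φ (e q) = g (k, l) := by
      rw [Finset.sum_eq_single (k, l)]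
      · rw [hφe k l]; simp
      · rintro ⟨i, j⟩ - hne
        rw [hφe i j]
        by_cases hik : i = k <;> by_cases hjl : j = l <;> simp_all
      · intro h; exact absurd (Finset.mem_univ _) h
    rw [hsum] at h0
    exact h0
  -- membership of generators in the span of `e`
  have hV₂eq : V₂ = Submodule.span ℂ (Set.range x) := by
    conv_lhs => rw [← Submodule.map_subtype_top V₂, ← b₂.span_eq]
    rw [Submodule.map_span, ← Set.range_comp]
    rfl
  have hV₄eq : V₄ = Submodule.span ℂ (Set.range (fun s => (b₄ s : V))) := by
    conv_lhs => rw [← Submodule.map_subtype_top V₄, ← b₄.span_eq]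
    rw [Submodule.map_span, ← Set.range_comp]
    rfl
  have hgen : ∀ a ∈ V₂, ∀ b ∈ V₄,
      ι ℂ a * ι ℂ b * ι ℂ v ∈ Submodule.span ℂ (Set.range e) := by
    intro a ha b hb
    rw [hV₄eq] at hb
    induction hb using Submodule.span_induction with
    | mem b hbmem =>
      obtain ⟨s, rfl⟩ := hbmem
      rcases s with s | j
      · -- b is (a multiple of) v
        beta_reduce
        have : ((b₄ (Sum.inl s) : V₄) : V) = v := by
          rw [Fin.fin_one_eq_zero s, hb₄inl, hv'def]
        rw [this, mul_assoc, ι_sq_zero, mul_zero]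
        exact Submodule.zero_mem _
      · -- b = w j : induct on a
        beta_reduce
        have hwj : ((b₄ (Sum.inr j) : V₄) : V) = w j := by rw [hb₄inr j, hwdef]
        rw [hwj]
        rw [hV₂eq] at ha
        induction ha using Submodule.span_induction with
        | mem a hamem =>
          obtain ⟨i, rfl⟩ := hamem
          exact Submodule.subset_span ⟨(i, j), by rw [hedef]⟩
        | zero => simp only [map_zero, zero_mul]; exact Submodule.zero_mem _
        | add a₁ a₂ h₁ h₂ ih₁ ih₂ =>
          rw [map_add, add_mul, add_mul]
          exact Submodule.add_mem _ ih₁ ih₂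
        | smul r a hmem ih =>
          rw [map_smul, smul_mul_assoc, smul_mul_assoc]
          exact Submodule.smul_mem _ r ih
    | zero =>
      simp only [map_zero, mul_zero, zero_mul]
      exact Submodule.zero_mem _
    | add b₁ b₂ h₁ h₂ ih₁ ih₂ =>
      rw [map_add, mul_add, add_mul]
      exact Submodule.add_mem _ ih₁ ih₂
    | smul r b hmem ih =>
      rw [map_smul, mul_smul_comm, smul_mul_assoc]
      exact Submodule.smul_mem _ r ih
  -- the span equality
  have hspan : Fv24 V₂ V₄ v = Submodule.span ℂ (Set.range e) := by
    refine le_antisymm (Submodule.span_le.mpr ?_) (Submodule.span_le.mpr ?_)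
    · rintro y ⟨a, ha, b, hb, rfl⟩
      exact hgen a ha b hb
    · rintro y ⟨⟨i, j⟩, rfl⟩
      refine Submodule.subset_span ⟨x i, ?_, w j, ?_, by rw [hedef]⟩
      · rw [hxdef]; exact (b₂ i).2
      · rw [hwdef]; exact ((b₃ j : V₄)).2
  refine ⟨?_, ?_, ?_⟩
  · -- part 1
    rw [Fv24, Submodule.span_le]
    rintro y ⟨a, ha, b, hb, rfl⟩
    exact Submodule.subset_span ⟨a, ha, b, hb, v, hvV₄, rfl⟩
  · -- part 2: dimension
    rw [hspan, finrank_span_eq_card hlie]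
    simp
  · -- part 3: isotropy
    intro a ha b hb
    have h0 : a * b = 0 := Fv24_mul_eq_zero V₂ V₄ v ha hb
    have hz : (⟨a * b, mul_mem_exteriorPower (Fv24_le V₂ V₄ v ha) (Fv24_le V₂ V₄ v hb)⟩ :
        ⋀[ℂ]^6 V) = 0 := Subtype.ext h0
    rw [hz, map_zero]
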